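/- Let V be a real inner product space and let v₁, v₂ ∈ V with 0 < ‖v₁‖² ≤ ‖v₂‖² and 2·|⟪v₁, v₂⟫| ≤ ‖v₁‖². If x₁ and x₂ are nonzero integers such that ‖x₁·v₁ + x₂·v₂‖² ≤ ‖v₂‖², then x₁ ∈ {1, −1}, x₂ ∈ {1, −1}, 2·|⟪v₁, v₂⟫| = ‖v₁‖², and ‖x₁·v₁ + x₂·v₂‖² = ‖v₂‖². (This is the key lattice computation in the proof that the rank-2 sublattice generated by vectors attaining the first two successive minima of the Gross lattice is unique.) -/

import Mathlib

open scoped RealInnerProductSpace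

set_option maxHeartbeats 1000000 in
/-- Let `v₁, v₂` be vectors in a real inner product space with `0 < ‖v₁‖² ≤ ‖v₂‖²` and
`2|⟪v₁, v₂⟫| ≤ ‖v₁‖²`.  If `x₁, x₂` are nonzero integers with
`‖x₁·v₁ + x₂·v₂‖² ≤ ‖v₂‖²`, then `x₁ = ±1`, `x₂ = ±1`, `2|⟪v₁, v₂⟫| = ‖v₁‖²` and
`‖x₁·v₁ + x₂·v₂‖² = ‖v₂‖²`. -/
theorem stmt_17 {V : Type*} [NormedAddCommGroup V] [InnerProductSpace ℝ V]
    (v₁ v₂ : V) (h0 : 0 < ‖v₁‖ ^ 2) (h12 : ‖v₁‖ ^ 2 ≤ ‖v₂‖ ^ 2)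
    (hsr : 2 * |⟪v₁, v₂⟫| ≤ ‖v₁‖ ^ 2)
    (x₁ x₂ : ℤ) (hx₁ : x₁ ≠ 0) (hx₂ : x₂ ≠ 0)
    (h : ‖x₁ • v₁ + x₂ • v₂‖ ^ 2 ≤ ‖v₂‖ ^ 2) :
    (x₁ = 1 ∨ x₁ = -1) ∧ (x₂ = 1 ∨ x₂ = -1) ∧ 2 * |⟪v₁, v₂⟫| = ‖v₁‖ ^ 2 ∧
      ‖x₁ • v₁ + x₂ • v₂‖ ^ 2 = ‖v₂‖ ^ 2 := by
  have hexp : ‖x₁ • v₁ + x₂ • v₂‖ ^ 2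
      = (x₁ : ℝ) ^ 2 * ‖v₁‖ ^ 2 + 2 * ((x₁ : ℝ) * (x₂ : ℝ)) * ⟪v₁, v₂⟫
        + (x₂ : ℝ) ^ 2 * ‖v₂‖ ^ 2 := by
    rw [← Int.cast_smul_eq_zsmul ℝ x₁, ← Int.cast_smul_eq_zsmul ℝ x₂,
      @norm_add_sq_real, norm_smul, norm_smul, real_inner_smul_left,
      real_inner_smul_right]
    simp [mul_pow, sq_abs]
    ring
  set a := ‖v₁‖ ^ 2 with ha
  set c := ‖v₂‖ ^ 2 with hc
  set b := ⟪v₁, v₂⟫ with hb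
  set m := |(x₁ : ℝ)| with hmdef
  set n := |(x₂ : ℝ)| with hndef
  have hm : (1 : ℝ) ≤ m := by
    rw [hmdef, ← Int.cast_abs]; exact_mod_cast Int.one_le_abs hx₁
  have hn : (1 : ℝ) ≤ n := by
    rw [hndef, ← Int.cast_abs]; exact_mod_cast Int.one_le_abs hx₂
  have hm0 : (0 : ℝ) ≤ m := by linarith
  have hn0 : (0 : ℝ) ≤ n := by linarith
  have hbb : 2 * ((x₁ : ℝ) * (x₂ : ℝ)) * b ≥ -(m * n * a) := by
    have h1 : 2 * ((x₁ : ℝ) * (x₂ : ℝ)) * b ≥ -(2 * (m * n) * |b|) := by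
      calc 2 * ((x₁ : ℝ) * (x₂ : ℝ)) * b
          ≥ -|2 * ((x₁ : ℝ) * (x₂ : ℝ)) * b| := neg_abs_le _
        _ = -(2 * (m * n) * |b|) := by
            rw [abs_mul, abs_mul, abs_mul]; norm_num; exact Or.inl rfl
    have h2 : (m * n) * (2 * |b|) ≤ (m * n) * a :=
      mul_le_mul_of_nonneg_left hsr (by positivity)
    nlinarith
  have key : m ^ 2 * a - m * n * a + (n ^ 2 - 1) * c ≤ 0 := by
    rw [hexp] at h
    nlinarith [sq_abs (x₁ : ℝ), sq_abs (x₂ : ℝ)]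
  have hn2 : (1 : ℝ) ≤ n ^ 2 := by nlinarith
  have h5 : (n ^ 2 - 1) * a ≤ (n ^ 2 - 1) * c :=
    mul_le_mul_of_nonneg_left h12 (by linarith)
  have h6 : (m ^ 2 - m * n + n ^ 2 - 1) * a ≤ 0 := by nlinarith
  have h7 : m ^ 2 - m * n + n ^ 2 - 1 ≤ 0 := by
    by_contra hcon
    push_neg at hcon
    have := mul_pos hcon h0
    linarith
  have hmn1 : m * n ≤ 1 := by nlinarith [sq_nonneg (m - n)]
  have hm1 : m = 1 := by nlinarith [mul_le_mul_of_nonneg_left hn hm0]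
  have hn1 : n = 1 := by nlinarith [mul_le_mul_of_nonneg_left hm hn0]
  have hx1 : x₁ = 1 ∨ x₁ = -1 := by
    have h' : ((|x₁| : ℤ) : ℝ) = 1 := by rw [Int.cast_abs]; exact hm1
    have h'' : |x₁| = 1 := by exact_mod_cast h'
    rwa [abs_eq (by norm_num : (0:ℤ) ≤ 1)] at h''
  have hx2 : x₂ = 1 ∨ x₂ = -1 := by
    have h' : ((|x₂| : ℤ) : ℝ) = 1 := by rw [Int.cast_abs]; exact hn1
    have h'' : |x₂| = 1 := by exact_mod_cast h'
    rwa [abs_eq (by norm_num : (0:ℤ) ≤ 1)] at h''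
  have hs1 : (x₁ : ℝ) ^ 2 = 1 := by rcases hx1 with h' | h' <;> simp [h']
  have hs2 : (x₂ : ℝ) ^ 2 = 1 := by rcases hx2 with h' | h' <;> simp [h']
  rw [hexp] at h ⊢
  rw [hs1, hs2] at h ⊢
  have hprod : (x₁ : ℝ) * (x₂ : ℝ) = 1 ∨ (x₁ : ℝ) * (x₂ : ℝ) = -1 := by
    rcases hx1 with h' | h' <;> rcases hx2 with h'' | h'' <;> simp [h', h'']
  have hb2 : 2 * ((x₁ : ℝ) * (x₂ : ℝ)) * b ≥ -(2 * |b|) := by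
    rcases hprod with h' | h' <;> rw [h'] <;>
      [linarith [neg_abs_le b]; linarith [le_abs_self b]]
  have heq : 2 * |b| = a := by linarith
  have hcross : 2 * ((x₁ : ℝ) * (x₂ : ℝ)) * b = -a := by linarith
  exact ⟨hx1, hx2, heq, by linarith⟩
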